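/- Let k, m be positive natural numbers and define λ(m) = (1/2)(-k^4 + 5k^2 m^2 + 2m^4 - sqrt(k^8 + 2k^6 m^2 + k^4 m^4 + 32 k^2 m^6)). Then λ(m) < 0 if 1 ≤ m ≤ k-1, λ(m) = 0 if m = k, and λ(m) > 0 if m > k. -/
import Mathlib


theorem stmt_1 (k m : ℕ) (hk : 0 < k) (hm : 0 < m)
    (lam : ℝ)
    (hlam : lam = (1/2) * (-(k:ℝ)^4 + 5*(k:ℝ)^2*(m:ℝ)^2 + 2*(m:ℝ)^4
      - Real.sqrt ((k:ℝ)^8 + 2*(k:ℝ)^6*(m:ℝ)^2 + (k:ℝ)^4*(m:ℝ)^4 + 32*(k:ℝ)^2*(m:ℝ)^6))) :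
    (1 ≤ m ∧ m ≤ k - 1 → lam < 0) ∧ (m = k → lam = 0) ∧ (m > k → 0 < lam) := by
  have hK : (1:ℝ) ≤ (k:ℝ) := by exact_mod_cast hk
  have hM : (1:ℝ) ≤ (m:ℝ) := by exact_mod_cast hm
  have hs2 : (0:ℝ) < (k:ℝ)^8 + 2*(k:ℝ)^6*(m:ℝ)^2 + (k:ℝ)^4*(m:ℝ)^4 + 32*(k:ℝ)^2*(m:ℝ)^6 := by
    positivity
  refine ⟨?_, ?_, ?_⟩
  · rintro ⟨h1, h2⟩
    have hmk : m < k := by omega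
    have hMK : (m:ℝ) < (k:ℝ) := by exact_mod_cast hmk
    have key : (-(k:ℝ)^4 + 5*(k:ℝ)^2*(m:ℝ)^2 + 2*(m:ℝ)^4)^2
        < (k:ℝ)^8 + 2*(k:ℝ)^6*(m:ℝ)^2 + (k:ℝ)^4*(m:ℝ)^4 + 32*(k:ℝ)^2*(m:ℝ)^6 := by
      nlinarith [mul_pos (mul_pos (show (0:ℝ) < 4*(m:ℝ)^2 by positivity)
        (show (0:ℝ) < (k:ℝ)^2 - (m:ℝ)^2 by nlinarith))
        (show (0:ℝ) < ((m:ℝ)^2 - (k:ℝ)^2)^2 + 2*(k:ℝ)^4 by positivity)]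
    have hAlt : -(k:ℝ)^4 + 5*(k:ℝ)^2*(m:ℝ)^2 + 2*(m:ℝ)^4
        < Real.sqrt ((k:ℝ)^8 + 2*(k:ℝ)^6*(m:ℝ)^2 + (k:ℝ)^4*(m:ℝ)^4 + 32*(k:ℝ)^2*(m:ℝ)^6) := by
      rcases le_or_gt (-(k:ℝ)^4 + 5*(k:ℝ)^2*(m:ℝ)^2 + 2*(m:ℝ)^4) 0 with h | h
      · exact lt_of_le_of_lt h (Real.sqrt_pos.mpr hs2)
      · exact (Real.lt_sqrt h.le).mpr key
    rw [hlam]; linarith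
  · intro h
    subst h
    rw [hlam]
    have h6 : Real.sqrt ((m:ℝ)^8 + 2*(m:ℝ)^6*(m:ℝ)^2 + (m:ℝ)^4*(m:ℝ)^4 + 32*(m:ℝ)^2*(m:ℝ)^6)
        = 6*(m:ℝ)^4 := by
      have he : (m:ℝ)^8 + 2*(m:ℝ)^6*(m:ℝ)^2 + (m:ℝ)^4*(m:ℝ)^4 + 32*(m:ℝ)^2*(m:ℝ)^6
          = (6*(m:ℝ)^4)^2 := by ring
      rw [he, Real.sqrt_sq (by positivity)]
    rw [h6]; ring
  · intro h
    have hMK : (k:ℝ) < (m:ℝ) := by exact_mod_cast h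
    have hApos : (0:ℝ) < -(k:ℝ)^4 + 5*(k:ℝ)^2*(m:ℝ)^2 + 2*(m:ℝ)^4 := by
      have h2 : (k:ℝ)^2 < (m:ℝ)^2 := by nlinarith
      nlinarith [mul_pos (show (0:ℝ) < (k:ℝ)^2 by positivity) (show (0:ℝ) < (m:ℝ)^2 - (k:ℝ)^2 by linarith)]
    have key : (k:ℝ)^8 + 2*(k:ℝ)^6*(m:ℝ)^2 + (k:ℝ)^4*(m:ℝ)^4 + 32*(k:ℝ)^2*(m:ℝ)^6
        < (-(k:ℝ)^4 + 5*(k:ℝ)^2*(m:ℝ)^2 + 2*(m:ℝ)^4)^2 := by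
      nlinarith [mul_pos (mul_pos (show (0:ℝ) < 4*(m:ℝ)^2 by positivity)
        (show (0:ℝ) < (m:ℝ)^2 - (k:ℝ)^2 by nlinarith))
        (show (0:ℝ) < ((m:ℝ)^2 - (k:ℝ)^2)^2 + 2*(k:ℝ)^4 by positivity)]
    have hlt : Real.sqrt ((k:ℝ)^8 + 2*(k:ℝ)^6*(m:ℝ)^2 + (k:ℝ)^4*(m:ℝ)^4 + 32*(k:ℝ)^2*(m:ℝ)^6)
        < -(k:ℝ)^4 + 5*(k:ℝ)^2*(m:ℝ)^2 + 2*(m:ℝ)^4 :=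
      (Real.sqrt_lt' hApos).mpr key
    rw [hlam]; linarith
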